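/- Assume D is an ultrafilter on κ, E is an ultrafilter on θ, and g_ε : κ → θ for ε < ε(*) satisfy: g_{ε₁} ≠ g_{ε₂} mod D for ε₁ < ε₂, and g_ε⁻¹[A] ∈ D for every ε < ε(*) and A ∈ E. Let I be a linear order of cardinality λ ≥ θ. Then there exist pairwise distinct elements f^α_ε/D of the ultrapower I^κ/D (for ε < ε(*), α < λ) such that for all α < β < λ, either f^α_ε/D < f^β_ε/D for all ε < ε(*), or f^β_ε/D < f^α_ε/D for all ε < ε(*). In particular, if ε(*) ≥ 2 then I^κ/D is not (λ,2)-entangled. -/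

import Mathlib

open Cardinal

universe u

/-- Proposition 6.1: given ultrafilters `D` on `κ`, `E` on `θ`, and functions
    `g_ε : κ → θ` pairwise distinct mod `D` with `g_ε⁻¹[A] ∈ D` for all `A ∈ E`,
    and a linear order `I` of cardinality `λ ≥ θ`, there are pairwise distinct
    elements `f^α_ε/D` of `I^κ/D` such that for `α < β` either all coordinates
    increase or all decrease. In particular, if `ε(*) ≥ 2` then `I^κ/D` is
    not (λ,2)-entangled. -/
theorem stmt_9 (κ θ : Type u) (D : Ultrafilter κ) (E : Ultrafilter θ)
    (lam : Cardinal.{u}) (ιε : Type u)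
    (g : ιε → κ → θ)
    (hg1 : ∀ ε₁ ε₂ : ιε, ε₁ ≠ ε₂ → {i | g ε₁ i = g ε₂ i} ∉ D)
    (hg2 : ∀ (ε : ιε) (A : Set θ), A ∈ E → g ε ⁻¹' A ∈ D)
    (I : Type u) [LinearOrder I] (hI : #I = lam) (hθ : #θ ≤ lam) :
    ∃ f : ιε → lam.ord.ToType → κ → I,
      (∀ (ε ε' : ιε) (α α' : lam.ord.ToType), (ε, α) ≠ (ε', α') →
        {i | f ε α i = f ε' α' i} ∉ D) ∧
      (∀ α β, α < β →
        (∀ ε, {i | f ε α i < f ε β i} ∈ D) ∨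
        (∀ ε, {i | f ε β i < f ε α i} ∈ D)) ∧
      (2 ≤ #ιε →
        ∃ t : Fin 2 → lam.ord.ToType → κ → I,
          (∀ (e : Fin 2) (α β : lam.ord.ToType), α ≠ β →
            {i | t e α i = t e β i} ∉ D) ∧
          ¬∃ α β : lam.ord.ToType, α < β ∧
            {i | t 0 α i < t 0 β i} ∈ D ∧ {i | t 1 β i < t 1 α i} ∈ D) := by
  by_cases hsub : ∀ ε₁ ε₂ : ιε, ε₁ = ε₂
  · -- ιε is a subsingleton: constant functions suffice
    obtain ⟨c⟩ : Nonempty (lam.ord.ToType ↪ I) := by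
      rw [← Cardinal.le_def, Cardinal.mk_ord_toType, hI]
    refine ⟨fun _ α _ => c α, ?_, ?_, ?_⟩
    · rintro ε ε' α α' hne hD
      obtain rfl := hsub ε ε'
      have hαα : α ≠ α' := fun h => hne (by rw [h])
      have : {i : κ | c α = c α'} = ∅ :=
        Set.eq_empty_of_forall_notMem fun i hi => hαα (c.injective hi)
      rw [this] at hD
      exact D.empty_notMem hD
    · intro α β hαβ
      rcases lt_or_gt_of_ne (c.injective.ne hαβ.ne) with h | h
      · left; intro ε
        have : {i : κ | c α < c β} = Set.univ := Set.eq_univ_of_forall fun i => h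
        rw [this]; exact D.toFilter.univ_mem
      · right; intro ε
        have : {i : κ | c β < c α} = Set.univ := Set.eq_univ_of_forall fun i => h
        rw [this]; exact D.toFilter.univ_mem
    · intro h2
      have h1 : #ιε ≤ 1 := Cardinal.le_one_iff_subsingleton.mpr ⟨fun a b => hsub a b⟩
      have : (2 : Cardinal) ≤ 1 := h2.trans h1
      norm_num at this
  · push_neg at hsub
    obtain ⟨ε₁, ε₂, hεne⟩ := hsub
    -- θ must be infinite
    have hθinf : Infinite θ := by
      by_contra hfin
      rw [not_infinite_iff_finite] at hfin
      obtain ⟨t₀, hE⟩ := E.eq_pure_of_finite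
      have ht : {t₀} ∈ E := by rw [hE]; exact rfl
      have h1 : g ε₁ ⁻¹' {t₀} ∈ D := hg2 ε₁ _ ht
      have h2 : g ε₂ ⁻¹' {t₀} ∈ D := hg2 ε₂ _ ht
      refine hg1 ε₁ ε₂ hεne (Filter.mem_of_superset (Filter.inter_mem h1 h2) ?_)
      rintro i ⟨hi1, hi2⟩
      simp only [Set.mem_preimage, Set.mem_singleton_iff] at hi1 hi2
      simp [Set.mem_setOf_eq, hi1, hi2]
    have hlaminf : ℵ₀ ≤ lam := (Cardinal.infinite_iff.mp hθinf).trans hθ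
    obtain ⟨emb⟩ : Nonempty (lam.ord.ToType × θ ↪ I) := by
      rw [← Cardinal.le_def, Cardinal.mk_prod, Cardinal.lift_id, Cardinal.lift_id,
        Cardinal.mk_ord_toType, hI]
      calc lam * #θ ≤ lam * lam := mul_le_mul_right hθ _
        _ = lam := Cardinal.mul_eq_self hlaminf
    set F : ιε → lam.ord.ToType → κ → I := fun ε α i => emb (α, g ε i) with hF
    have hdist : ∀ (ε ε' : ιε) (α α' : lam.ord.ToType), (ε, α) ≠ (ε', α') →
        {i | F ε α i = F ε' α' i} ∉ D := by
      rintro ε ε' α α' hne hD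
      by_cases hα : α = α'
      · subst hα
        have hεε : ε ≠ ε' := fun h => hne (by rw [h])
        refine hg1 ε ε' hεε (Filter.mem_of_superset hD ?_)
        intro i hi
        have := emb.injective hi
        exact (Prod.mk.injEq _ _ _ _ ▸ this).2
      · have : {i : κ | F ε α i = F ε' α' i} = ∅ := by
          refine Set.eq_empty_of_forall_notMem fun i hi => hα ?_
          exact ((Prod.mk.injEq _ _ _ _ ▸ emb.injective hi)).1
        rw [this] at hD
        exact D.empty_notMem hD
    have hmono : ∀ α β, α < β →
        (∀ ε, {i | F ε α i < F ε β i} ∈ D) ∨ (∀ ε, {i | F ε β i < F ε α i} ∈ D) := by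
      intro α β hlt
      by_cases hS : {t : θ | emb (α, t) < emb (β, t)} ∈ E
      · left; intro ε; exact hg2 ε _ hS
      · right; intro ε
        have hSc : {t : θ | emb (α, t) < emb (β, t)}ᶜ ∈ E :=
          Ultrafilter.compl_mem_iff_notMem.mpr hS
        refine Filter.mem_of_superset (hg2 ε _ hSc) ?_
        intro i hi
        simp only [Set.mem_preimage, Set.mem_compl_iff, Set.mem_setOf_eq, not_lt] at hi
        have hne2 : emb (β, g ε i) ≠ emb (α, g ε i) := fun h =>
          hlt.ne' ((Prod.mk.injEq _ _ _ _ ▸ emb.injective h)).1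
        exact lt_of_le_of_ne hi hne2
    refine ⟨F, hdist, hmono, ?_⟩
    intro _
    refine ⟨fun e => if e = 0 then F ε₁ else F ε₂, ?_, ?_⟩
    · intro e α β hαβ
      by_cases he : e = 0 <;> simp only [he, if_true, if_false, if_pos, if_neg] <;>
        exact hdist _ _ α β (fun h => hαβ ((Prod.mk.injEq _ _ _ _ ▸ h)).2)
    · rintro ⟨α, β, hlt, h0, h1⟩
      simp only [if_pos rfl] at h0
      have h10 : (1 : Fin 2) ≠ 0 := by decide
      simp only [if_neg h10] at h1
      rcases hmono α β hlt with h | h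
      · obtain ⟨i, hi1, hi2⟩ := Filter.nonempty_of_mem (Filter.inter_mem (h ε₂) h1)
        exact absurd hi2 (not_lt.mpr hi1.le)
      · obtain ⟨i, hi1, hi2⟩ := Filter.nonempty_of_mem (Filter.inter_mem (h ε₁) h0)
        exact absurd hi2 (not_lt.mpr hi1.le)
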